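/- If Φ is a loop-free unit flow from A to B, then the stopped paths (Y_0,…,Y_{τ_B^Y}) of the associated Markov chain Y are self-avoiding P^Φ-almost surely, i.e., almost surely Y_i ≠ Y_j for all 0 ≤ i < j ≤ τ_B^Y. -/

import Mathlib

open MeasureTheory ProbabilityTheory ENNReal Set Filter
open scoped Classical

noncomputable section

variable {Ω : Type*}

/-- The Dirichlet form `E(h) = (1/2) ∫ (h(y)-h(x))² K(dx,dy)` (in `ℝ≥0∞`). -/
def dirichletForm [MeasurableSpace Ω] (K : Measure (Ω × Ω)) (h : Ω → ℝ) : ℝ≥0∞ :=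
  2⁻¹ * ∫⁻ p, ENNReal.ofReal ((h p.2 - h p.1) ^ 2) ∂K

/-- The class `V_AB` of test potentials. -/
def VAB [MeasurableSpace Ω] (A B : Set Ω) (K : Measure (Ω × Ω)) : Set (Ω → ℝ) :=
  {h | Measurable h ∧ (∀ x ∈ A, h x = 1) ∧ (∀ x ∈ B, h x = 0) ∧
    (∀ x, 0 ≤ h x ∧ h x ≤ 1) ∧ dirichletForm K h < ⊤}

/-- The capacity `Cap(A,B)`, defined by the Dirichlet principle. -/
def Cap [MeasurableSpace Ω] (A B : Set Ω) (K : Measure (Ω × Ω)) : ℝ≥0∞ :=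
  ⨅ h ∈ VAB A B K, dirichletForm K h

/-- Finite paths `(γ₀, …, γ_{n+1})` with at least one edge. -/
abbrev PathSpace (Ω : Type*) := Σ n : ℕ, Fin (n + 2) → Ω

/-- The set `Γ_AB` of finite paths from `A` to `B` not touching `B` before the end. -/
def GammaAB (A B : Set Ω) : Set (PathSpace Ω) :=
  {γ | γ.2 0 ∈ A ∧ γ.2 (Fin.last (γ.1 + 1)) ∈ B ∧
    ∀ i : Fin (γ.1 + 2), 0 < (i : ℕ) → (i : ℕ) < γ.1 + 1 → γ.2 i ∉ B}

/-- Sum of `g` over the (directed) edges of the path `γ`. -/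
def pathSum (g : Ω × Ω → ℝ≥0∞) (γ : PathSpace Ω) : ℝ≥0∞ :=
  ∑ j : Fin (γ.1 + 1), g (γ.2 j.castSucc, γ.2 j.succ)

/-- `Φ` is the edge measure `Φ_P` of the path measure `P`. -/
def IsEdgeMeasure [MeasurableSpace Ω] (P : Measure (PathSpace Ω)) (Φ : Measure (Ω × Ω)) : Prop :=
  ∀ g : Ω × Ω → ℝ≥0∞, Measurable g → ∫⁻ p, g p ∂Φ = ∫⁻ γ, pathSum g γ ∂P

/-- `Φ` is a unit flow from `A` to `B`. -/
def IsUnitFlow [MeasurableSpace Ω] (A B : Set Ω) (Φ : Measure (Ω × Ω)) : Prop :=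
  SigmaFinite Φ ∧
  Φ (A ×ˢ univ) = 1 ∧ Φ (univ ×ˢ A) = 0 ∧
  Φ (univ ×ˢ B) = 1 ∧ Φ (B ×ˢ univ) = 0 ∧
  (∀ C : Set Ω, MeasurableSet C → C ⊆ (A ∪ B)ᶜ → Φ (C ×ˢ univ) = Φ (univ ×ˢ C)) ∧
  ∃ χ : Set (Ω × Ω), MeasurableSet χ ∧ Φ χᶜ = 0 ∧ ∀ x y : Ω, (x, y) ∈ χ → (y, x) ∉ χ

/-- `χ` contains no loops. -/
def NoLoops (χ : Set (Ω × Ω)) : Prop :=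
  ∀ (n : ℕ) (γ : Fin (n + 2) → Ω), γ (Fin.last (n + 1)) = γ 0 →
    ∃ j : Fin (n + 1), (γ j.castSucc, γ j.succ) ∉ χ

/-- `Φ` is a loop-free unit flow from `A` to `B`. -/
def IsLoopFreeUnitFlow [MeasurableSpace Ω] (A B : Set Ω) (Φ : Measure (Ω × Ω)) : Prop :=
  IsUnitFlow A B Φ ∧
  ∃ χ : Set (Ω × Ω), MeasurableSet χ ∧ Φ χᶜ = 0 ∧
    (∀ x y : Ω, (x, y) ∈ χ → (y, x) ∉ χ) ∧ NoLoops χ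

/-- `Φ(dx,dy) = ν(dx) ℓ(x,dy)` with `ν = Φ.fst` the left marginal. -/
def Disintegrates [MeasurableSpace Ω] (Φ : Measure (Ω × Ω)) (ℓ : Kernel Ω Ω) : Prop :=
  ∀ g : Ω × Ω → ℝ≥0∞, Measurable g →
    ∫⁻ p, g p ∂Φ = ∫⁻ x, ∫⁻ y, g (x, y) ∂(ℓ x) ∂Φ.fst

/-- Finite-dimensional distributions of the Markov chain with initial law `μ0` and kernel `ℓ`. -/
def fdd [MeasurableSpace Ω] (μ0 : Measure Ω) (ℓ : Kernel Ω Ω) :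
    (n : ℕ) → Measure (Fin (n + 1) → Ω)
  | 0 => μ0.map (fun x => fun _ => x)
  | n + 1 => (fdd μ0 ℓ n).bind (fun p => (ℓ (p (Fin.last n))).map (Fin.snoc p))

/-- `P` is the law of the Markov chain with initial law `μ0` and transition kernel `ℓ`. -/
def IsChainLaw [MeasurableSpace Ω] (μ0 : Measure Ω) (ℓ : Kernel Ω Ω)
    (P : Measure (ℕ → Ω)) : Prop :=
  IsProbabilityMeasure P ∧
  ∀ n : ℕ, P.map (fun ω (i : Fin (n + 1)) => ω (i : ℕ)) = fdd μ0 ℓ n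

/-- `Σ_{n=1}^{τ_B} g(Y_{n-1}, Y_n)`, where `τ_B = min{n ≥ 1 : Y_n ∈ B}`. -/
def stoppedSum (B : Set Ω) (g : Ω × Ω → ℝ≥0∞) (ω : ℕ → Ω) : ℝ≥0∞ :=
  ∑' n : ℕ, if ∀ m, 1 ≤ m → m ≤ n → ω m ∉ B then g (ω n, ω (n + 1)) else 0

/-- The event `τ_B < ∞`. -/
def HitsB (B : Set Ω) (ω : ℕ → Ω) : Prop := ∃ n : ℕ, 1 ≤ n ∧ ω n ∈ B

/-- `τ_B`, viewed in `ℝ≥0∞`. -/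
def hitTimeE (B : Set Ω) (ω : ℕ → Ω) : ℝ≥0∞ :=
  ∑' n : ℕ, if ∀ m, 1 ≤ m → m ≤ n → ω m ∉ B then 1 else 0

/-- The Berman-Konsowa functional `E^Φ[ (Σ_{n=1}^{τ_B} g(Y_{n-1},Y_n))⁻¹ ]`, with the
reciprocal taken to be `0` on `{τ_B = ∞}` (and automatically `0` when the sum is infinite). -/
def bkValue [MeasurableSpace Ω] (B : Set Ω) (g : Ω × Ω → ℝ≥0∞)
    (P : Measure (ℕ → Ω)) : ℝ≥0∞ :=
  ∫⁻ ω, (if HitsB B ω then (stoppedSum B g ω)⁻¹ else 0) ∂P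

end


section AuxSelfAvoid

variable {Ω : Type*} [MeasurableSpace Ω]

lemma measurable_finSnoc {n : ℕ} :
    Measurable (fun q : (Fin (n + 1) → Ω) × Ω => (Fin.snoc q.1 q.2 : Fin (n + 2) → Ω)) := by
  apply measurable_pi_lambda
  intro i
  refine Fin.lastCases ?_ ?_ i
  · simpa using measurable_snd
  · intro j
    simpa [Function.comp_def] using (measurable_pi_apply j).comp measurable_fst

lemma marginal_eq {Φ : Measure (Ω × Ω)} {ℓ : Kernel Ω Ω}
    (hdis : Disintegrates Φ ℓ) {T : Set (Ω × Ω)} (hT : MeasurableSet T) :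
    ∫⁻ x, ℓ x (Prod.mk x ⁻¹' T) ∂Φ.fst = Φ T := by
  have h := hdis (T.indicator 1) (measurable_one.indicator hT)
  rw [lintegral_indicator_one hT] at h
  rw [h]
  refine lintegral_congr fun x => ?_
  rw [← lintegral_indicator_one (measurable_prodMk_left hT)]
  refine lintegral_congr fun y => ?_
  simp [Set.indicator]

lemma marginal_snd_eq {Φ : Measure (Ω × Ω)} {ℓ : Kernel Ω Ω}
    (hdis : Disintegrates Φ ℓ) {D : Set Ω} (hD : MeasurableSet D) :
    ∫⁻ x, ℓ x D ∂Φ.fst = Φ (univ ×ˢ D) := by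
  have := marginal_eq hdis (T := univ ×ˢ D) (MeasurableSet.univ.prod hD)
  simpa using this

/-- The set of finite paths avoiding `B` after time `0`. -/
def prefixAvoid (B : Set Ω) (t : ℕ) : Set (Fin (t + 1) → Ω) :=
  {p | ∀ m : Fin (t + 1), 1 ≤ (m : ℕ) → p m ∉ B}

lemma measurableSet_prefixAvoid {B : Set Ω} (hB : MeasurableSet B) (t : ℕ) :
    MeasurableSet (prefixAvoid B t) := by
  have : prefixAvoid B t =
      ⋂ m : Fin (t + 1), ⋂ (_ : 1 ≤ (m : ℕ)), (fun p => p m) ⁻¹' Bᶜ := by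
    ext p; simp [prefixAvoid]
  rw [this]
  exact MeasurableSet.iInter fun m => MeasurableSet.iInter fun _ =>
    (measurable_pi_apply m) hB.compl

lemma measurable_fddStep {ℓ : Kernel Ω Ω} [IsSFiniteKernel ℓ] {n : ℕ} :
    Measurable (fun p : Fin (n + 1) → Ω =>
      (ℓ (p (Fin.last n))).map (fun y => (Fin.snoc p y : Fin (n + 2) → Ω))) := by
  apply Measure.measurable_of_measurable_coe
  intro s hs
  have h1 : ∀ p : Fin (n + 1) → Ω,
      (ℓ (p (Fin.last n))).map (fun y => (Fin.snoc p y : Fin (n + 2) → Ω)) s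
        = ℓ (p (Fin.last n)) ((fun y => (Fin.snoc p y : Fin (n + 2) → Ω)) ⁻¹' s) := by
    intro p
    exact Measure.map_apply (measurable_finSnoc.comp measurable_prodMk_left) hs
  simp_rw [h1]
  have h2 := Kernel.measurable_kernel_prodMk_left
    (κ := ℓ.comap (fun p : Fin (n + 1) → Ω => p (Fin.last n)) (measurable_pi_apply _))
    (t := (fun q : (Fin (n + 1) → Ω) × Ω => (Fin.snoc q.1 q.2 : Fin (n + 2) → Ω)) ⁻¹' s)
    (measurable_finSnoc hs)
  simp only [Kernel.comap_apply] at h2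
  exact h2

lemma fdd_succ_apply {μ0 : Measure Ω} {ℓ : Kernel Ω Ω} [IsSFiniteKernel ℓ] {n : ℕ}
    {S : Set (Fin (n + 2) → Ω)} (hS : MeasurableSet S) :
    fdd μ0 ℓ (n + 1) S
      = ∫⁻ p, ℓ (p (Fin.last n)) {y | (Fin.snoc p y : Fin (n + 2) → Ω) ∈ S}
          ∂ fdd μ0 ℓ n := by
  show (fdd μ0 ℓ n).bind (fun p => (ℓ (p (Fin.last n))).map (Fin.snoc p)) S = _
  have hmf : Measurable (fun p : Fin (n + 1) → Ω =>
      (ℓ (p (Fin.last n))).map (fun y => (Fin.snoc p y : Fin (n + 2) → Ω))) := measurable_fddStep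
  rw [Measure.bind_apply hS hmf.aemeasurable]
  refine lintegral_congr fun p => ?_
  exact Measure.map_apply (measurable_finSnoc.comp measurable_prodMk_left) hS

/-- Before hitting `B`, the law of the chain is dominated by the left marginal of the flow. -/
lemma fdd_prefixAvoid_le {A B : Set Ω} (hA : MeasurableSet A) (hB : MeasurableSet B)
    {Φ : Measure (Ω × Ω)} (h0 : Φ (univ ×ˢ A) = 0)
    (hcons : ∀ C : Set Ω, MeasurableSet C → C ⊆ (A ∪ B)ᶜ → Φ (C ×ˢ univ) = Φ (univ ×ˢ C))
    {ℓ : Kernel Ω Ω} [IsMarkovKernel ℓ] (hdis : Disintegrates Φ ℓ) (t : ℕ) :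
    ((fdd (Φ.fst.restrict A) ℓ t).restrict (prefixAvoid B t)).map
      (fun p => p (Fin.last t)) ≤ Φ.fst := by
  induction t with
  | zero =>
      have hpa : prefixAvoid B 0 = (univ : Set (Fin 1 → Ω)) := by
        ext p; simp [prefixAvoid, Fin.forall_fin_one]
      rw [hpa, Measure.restrict_univ]
      show (fdd (Φ.fst.restrict A) ℓ 0).map _ ≤ Φ.fst
      rw [show fdd (Φ.fst.restrict A) ℓ 0 = (Φ.fst.restrict A).map (fun x => fun _ => x) from rfl,
        Measure.map_map (measurable_pi_apply (Fin.last 0))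
          (measurable_pi_lambda (fun x (_ : Fin 1) => x) fun _ => measurable_id)]
      have : ((fun p : Fin 1 → Ω => p (Fin.last 0)) ∘ fun x => fun _ => x) = id := rfl
      rw [this, Measure.map_id]
      exact Measure.restrict_le_self
  | succ t ih =>
      rw [Measure.le_iff]
      intro C hC
      have hmeas_ev : Measurable (fun p : Fin (t + 2) → Ω => p (Fin.last (t + 1))) :=
        measurable_pi_apply _
      rw [Measure.map_apply hmeas_ev hC,
        Measure.restrict_apply (hmeas_ev hC)]
      set S : Set (Fin (t + 2) → Ω) :=
        (fun p : Fin (t + 2) → Ω => p (Fin.last (t + 1))) ⁻¹' C ∩ prefixAvoid B (t + 1) with hSdef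
      have hSm : MeasurableSet S := (hmeas_ev hC).inter (measurableSet_prefixAvoid hB _)
      rw [fdd_succ_apply hSm]
      have hkey : ∀ p : Fin (t + 1) → Ω,
          ℓ (p (Fin.last t)) {y | (Fin.snoc p y : Fin (t + 2) → Ω) ∈ S}
            = (prefixAvoid B t).indicator
                (fun p => ℓ (p (Fin.last t)) (C ∩ Bᶜ)) p := by
        intro p
        by_cases hp : p ∈ prefixAvoid B t
        · rw [Set.indicator_of_mem hp]
          congr 1
          ext y
          simp only [hSdef, Set.mem_setOf_eq, Set.mem_inter_iff, Set.mem_preimage,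
            Fin.snoc_last, Set.mem_compl_iff]
          constructor
          · rintro ⟨hyC, hpa⟩
            refine ⟨hyC, ?_⟩
            have := hpa (Fin.last (t + 1)) (by simp)
            simpa [Fin.snoc_last] using this
          · rintro ⟨hyC, hyB⟩
            refine ⟨hyC, fun m => ?_⟩
            induction m using Fin.lastCases with
            | last => intro _; simpa [Fin.snoc_last] using hyB
            | cast j =>
                intro hm
                rw [Fin.snoc_castSucc]
                exact hp j (by simpa using hm)
        · rw [Set.indicator_of_notMem hp]
          have he : {y | (Fin.snoc p y : Fin (t + 2) → Ω) ∈ S} = ∅ := by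
            ext y
            simp only [hSdef, Set.mem_setOf_eq, Set.mem_inter_iff,
              Set.mem_empty_iff_false, iff_false]
            rintro ⟨-, hpa⟩
            apply hp
            intro j hj
            have := hpa j.castSucc (by simpa using hj)
            simpa [Fin.snoc_castSucc] using this
          rw [he, measure_empty]
      calc ∫⁻ p, ℓ (p (Fin.last t)) {y | (Fin.snoc p y : Fin (t + 2) → Ω) ∈ S}
              ∂ fdd (Φ.fst.restrict A) ℓ t
          = ∫⁻ p in prefixAvoid B t, ℓ (p (Fin.last t)) (C ∩ Bᶜ)
              ∂ fdd (Φ.fst.restrict A) ℓ t := by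
            simp_rw [hkey]
            exact lintegral_indicator (measurableSet_prefixAvoid hB t) _
        _ = ∫⁻ x, ℓ x (C ∩ Bᶜ)
              ∂ ((fdd (Φ.fst.restrict A) ℓ t).restrict (prefixAvoid B t)).map
                  (fun p => p (Fin.last t)) := by
            rw [lintegral_map (Kernel.measurable_coe ℓ (hC.inter hB.compl))
              (measurable_pi_apply _)]
        _ ≤ ∫⁻ x, ℓ x (C ∩ Bᶜ) ∂ Φ.fst := lintegral_mono' ih le_rfl
        _ = Φ (univ ×ˢ (C ∩ Bᶜ)) := marginal_snd_eq hdis (hC.inter hB.compl)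
        _ ≤ Φ.fst C := by
            have hsplit : (univ : Set Ω) ×ˢ (C ∩ Bᶜ)
                = univ ×ˢ ((C ∩ Bᶜ) ∩ A) ∪ univ ×ˢ ((C ∩ Bᶜ) ∩ Aᶜ) := by
              rw [← Set.prod_union, Set.inter_union_compl]
            rw [hsplit]
            refine le_trans (measure_union_le _ _) ?_
            have hz : Φ (univ ×ˢ ((C ∩ Bᶜ) ∩ A)) = 0 :=
              measure_mono_null (Set.prod_mono le_rfl Set.inter_subset_right) h0
            rw [hz, zero_add]
            have hsub : (C ∩ Bᶜ) ∩ Aᶜ ⊆ (A ∪ B)ᶜ := by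
              intro x hx
              simp only [Set.mem_compl_iff, Set.mem_union]
              push_neg
              exact ⟨hx.2, hx.1.2⟩
            rw [← hcons _ (((hC.inter hB.compl)).inter hA.compl) hsub]
            rw [Set.prod_univ, ← Measure.fst_apply ((hC.inter hB.compl).inter hA.compl)]
            exact measure_mono (Set.inter_subset_left.trans Set.inter_subset_left)

end AuxSelfAvoid

/-- **Loop-free flows have almost surely self-avoiding stopped paths.** -/
theorem loopFree_flow_selfAvoiding
    {Ω : Type*} [MeasurableSpace Ω] [TopologicalSpace Ω] [PolishSpace Ω] [BorelSpace Ω]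
    (A B : Set Ω) (hA : MeasurableSet A) (hB : MeasurableSet B) (hAB : Disjoint A B)
    (Φ : Measure (Ω × Ω)) (hΦ : IsLoopFreeUnitFlow A B Φ)
    (ℓ : Kernel Ω Ω) (hℓ : IsMarkovKernel ℓ) (hdis : Disintegrates Φ ℓ)
    (P : Measure (ℕ → Ω)) (hP : IsChainLaw (Φ.fst.restrict A) ℓ P) :
    ∀ᵐ ω ∂P, ∀ i j : ℕ, i < j → (∀ m : ℕ, 1 ≤ m → m < j → ω m ∉ B) → ω i ≠ ω j := by
  haveI := hℓ
  obtain ⟨hflow, χ, hχm, hχ0, hanti, hloop⟩ := hΦ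
  obtain ⟨hsig, hA1, hA0, hB1, hB0, hcons, -⟩ := hflow
  obtain ⟨hPprob, hPfdd⟩ := hP
  -- Step 1: for each time t, the chain a.s. does not use an edge outside χ before hitting B.
  have hnull : ∀ t : ℕ,
      P {ω : ℕ → Ω | (∀ m, 1 ≤ m → m ≤ t → ω m ∉ B) ∧ (ω t, ω (t + 1)) ∈ χᶜ} = 0 := by
    intro t
    set S : Set (Fin (t + 2) → Ω) :=
      {p | (∀ m : Fin (t + 2), 1 ≤ (m : ℕ) → (m : ℕ) ≤ t → p m ∉ B) ∧
        (p (Fin.last t).castSucc, p (Fin.last (t + 1))) ∈ χᶜ} with hSdef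
    have hS1 : MeasurableSet
        {p : Fin (t + 2) → Ω | ∀ m : Fin (t + 2), 1 ≤ (m : ℕ) → (m : ℕ) ≤ t → p m ∉ B} := by
      have : {p : Fin (t + 2) → Ω | ∀ m : Fin (t + 2), 1 ≤ (m : ℕ) → (m : ℕ) ≤ t → p m ∉ B}
          = ⋂ m : Fin (t + 2), ⋂ (_ : 1 ≤ (m : ℕ)), ⋂ (_ : (m : ℕ) ≤ t),
            (fun p => p m) ⁻¹' Bᶜ := by
        ext p; simp
      rw [this]
      exact MeasurableSet.iInter fun m => MeasurableSet.iInter fun _ =>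
        MeasurableSet.iInter fun _ => (measurable_pi_apply m) hB.compl
    have hS2 : MeasurableSet
        ((fun p : Fin (t + 2) → Ω => (p (Fin.last t).castSucc, p (Fin.last (t + 1)))) ⁻¹' χᶜ) :=
      ((measurable_pi_apply ((Fin.last t).castSucc)).prodMk
        (measurable_pi_apply (Fin.last (t + 1)))) hχm.compl
    have hSm : MeasurableSet S := hS1.inter hS2
    have hproj : Measurable (fun ω : ℕ → Ω => fun i : Fin (t + 2) => ω (i : ℕ)) :=
      measurable_pi_lambda _ fun i => measurable_pi_apply _
    have hset : {ω : ℕ → Ω | (∀ m, 1 ≤ m → m ≤ t → ω m ∉ B) ∧ (ω t, ω (t + 1)) ∈ χᶜ}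
        = (fun ω : ℕ → Ω => fun i : Fin (t + 2) => ω (i : ℕ)) ⁻¹' S := by
      ext ω
      simp only [hSdef, Set.mem_setOf_eq, Set.mem_preimage, Fin.coe_castSucc, Fin.val_last]
      constructor
      · rintro ⟨hcoord, hpair⟩
        exact ⟨fun m hm1 hm2 => hcoord (m : ℕ) hm1 hm2, hpair⟩
      · rintro ⟨hcoord, hpair⟩
        refine ⟨fun m hm1 hm2 => ?_, hpair⟩
        have := hcoord ⟨m, by omega⟩ (by simpa using hm1) (by simpa using hm2)
        simpa using this
    rw [hset, ← Measure.map_apply hproj hSm, hPfdd (t + 1), fdd_succ_apply hSm]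
    have hkey : ∀ p : Fin (t + 1) → Ω,
        ℓ (p (Fin.last t)) {y | (Fin.snoc p y : Fin (t + 2) → Ω) ∈ S}
          = (prefixAvoid B t).indicator
              (fun p => ℓ (p (Fin.last t)) (Prod.mk (p (Fin.last t)) ⁻¹' χᶜ)) p := by
      intro p
      by_cases hp : p ∈ prefixAvoid B t
      · rw [Set.indicator_of_mem hp]
        congr 1
        ext y
        simp only [hSdef, Set.mem_setOf_eq, Fin.snoc_castSucc, Fin.snoc_last,
          Set.mem_preimage]
        constructor
        · rintro ⟨-, hpair⟩; exact hpair
        · intro hpair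
          refine ⟨fun m => ?_, hpair⟩
          induction m using Fin.lastCases with
          | last => intro _ h2; exact absurd h2 (by simp)
          | cast j =>
              intro h1 _
              rw [Fin.snoc_castSucc]
              exact hp j (by simpa using h1)
      · rw [Set.indicator_of_notMem hp]
        have he : {y | (Fin.snoc p y : Fin (t + 2) → Ω) ∈ S} = ∅ := by
          ext y
          simp only [hSdef, Set.mem_setOf_eq, Set.mem_empty_iff_false, iff_false]
          rintro ⟨hcoord, -⟩
          apply hp
          intro j hj
          have := hcoord j.castSucc (by simpa using hj) (by simp; omega)
          simpa [Fin.snoc_castSucc] using this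
        rw [he, measure_empty]
    have hcalc : ∫⁻ p, ℓ (p (Fin.last t)) {y | (Fin.snoc p y : Fin (t + 2) → Ω) ∈ S}
          ∂ fdd (Φ.fst.restrict A) ℓ t ≤ Φ χᶜ := by
      calc ∫⁻ p, ℓ (p (Fin.last t)) {y | (Fin.snoc p y : Fin (t + 2) → Ω) ∈ S}
              ∂ fdd (Φ.fst.restrict A) ℓ t
          = ∫⁻ p in prefixAvoid B t, ℓ (p (Fin.last t)) (Prod.mk (p (Fin.last t)) ⁻¹' χᶜ)
              ∂ fdd (Φ.fst.restrict A) ℓ t := by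
            simp_rw [hkey]
            exact lintegral_indicator (measurableSet_prefixAvoid hB t) _
        _ = ∫⁻ x, ℓ x (Prod.mk x ⁻¹' χᶜ)
              ∂ ((fdd (Φ.fst.restrict A) ℓ t).restrict (prefixAvoid B t)).map
                  (fun p => p (Fin.last t)) := by
            rw [lintegral_map (Kernel.measurable_kernel_prodMk_left hχm.compl)
              (measurable_pi_apply _)]
        _ ≤ ∫⁻ x, ℓ x (Prod.mk x ⁻¹' χᶜ) ∂ Φ.fst :=
            lintegral_mono' (fdd_prefixAvoid_le hA hB hA0 hcons hdis t) le_rfl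
        _ = Φ χᶜ := marginal_eq hdis hχm.compl
    rw [hχ0] at hcalc
    exact le_antisymm hcalc bot_le
  -- Step 2: a.s. all edges before hitting B lie in χ.
  have hae : ∀ᵐ ω ∂P, ∀ t : ℕ, (∀ m, 1 ≤ m → m ≤ t → ω m ∉ B) → (ω t, ω (t + 1)) ∈ χ := by
    rw [ae_all_iff]
    intro t
    rw [ae_iff]
    have : {ω : ℕ → Ω | ¬ ((∀ m, 1 ≤ m → m ≤ t → ω m ∉ B) → (ω t, ω (t + 1)) ∈ χ)}
        = {ω : ℕ → Ω | (∀ m, 1 ≤ m → m ≤ t → ω m ∉ B) ∧ (ω t, ω (t + 1)) ∈ χᶜ} := by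
      ext ω
      simp only [Set.mem_setOf_eq, Set.mem_compl_iff, Classical.not_imp]
    rw [this]
    exact hnull t
  -- Step 3: loop-freeness forbids repetitions.
  filter_upwards [hae] with ω hω
  intro i j hij hnotB hEq
  set n' := j - i - 1 with hn'
  set γ : Fin (n' + 2) → Ω := fun k => ω (i + (k : ℕ)) with hγ
  have h0 : γ (Fin.last (n' + 1)) = γ 0 := by
    simp only [hγ, Fin.val_last, Fin.val_zero, Nat.add_zero]
    rw [show i + (n' + 1) = j from by omega]
    exact hEq.symm
  obtain ⟨k, hk⟩ := hloop n' γ h0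
  apply hk
  have hkb : (k : ℕ) < n' + 1 := k.isLt
  have hmem := hω (i + (k : ℕ)) (fun m hm1 hm2 => hnotB m hm1 (by omega))
  have e1 : γ k.castSucc = ω (i + (k : ℕ)) := by simp [hγ]
  have e2 : γ k.succ = ω (i + (k : ℕ) + 1) := by
    simp only [hγ, Fin.val_succ, ← Nat.add_assoc]
  rw [e1, e2]
  exact hmem
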